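/- For X ∈ ℝ^{n×k} with XᵀAX = J, a matrix Z of the form Z = XW + A⁻¹X⊥K satisfies ZᵀAX + XᵀAZ = 0 if and only if JW is skew-symmetric (for any K ∈ ℝ^{(n−k)×k}). -/

import Mathlib

open Matrix

/-- For `Z = X W + A⁻¹ X⊥ K`, one has `Zᵀ A X + Xᵀ A Z = 0` iff `J W` is skew-symmetric,
for any `K`. -/
theorem stmt_4 {n k : ℕ} (A : Matrix (Fin n) (Fin n) ℝ) (J : Matrix (Fin k) (Fin k) ℝ)
    (hA : Aᵀ = A) (hAinv : IsUnit A.det) (hJ : Jᵀ = J) (hJ2 : J * J = 1)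
    (X : Matrix (Fin n) (Fin k) ℝ) (hX : Xᵀ * A * X = J)
    (Xp : Matrix (Fin n) (Fin (n - k)) ℝ) (hXp : Xp.rank = n - k)
    (hperp : Xᵀ * Xp = 0)
    (W : Matrix (Fin k) (Fin k) ℝ) (K : Matrix (Fin (n - k)) (Fin k) ℝ) :
    (X * W + A⁻¹ * Xp * K)ᵀ * A * X + Xᵀ * A * (X * W + A⁻¹ * Xp * K) = 0 ↔
      (J * W)ᵀ = -(J * W) := by
  have hinvA : A⁻¹ * A = 1 := nonsing_inv_mul A hAinv
  have hAinvA : A * A⁻¹ = 1 := mul_nonsing_inv A hAinv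
  have hXpX : Xpᵀ * X = 0 := by
    have := congrArg Matrix.transpose hperp
    simpa [Matrix.transpose_mul] using this
  have hJW : (J * W)ᵀ = Wᵀ * J := by rw [Matrix.transpose_mul, hJ]
  have hLHS : (X * W + A⁻¹ * Xp * K)ᵀ * A * X + Xᵀ * A * (X * W + A⁻¹ * Xp * K)
      = Wᵀ * J + J * W := by
    have h1 : (X * W)ᵀ * A * X = Wᵀ * J := by
      rw [Matrix.transpose_mul, Matrix.mul_assoc, Matrix.mul_assoc, ← Matrix.mul_assoc Xᵀ, hX]
    have h2 : (A⁻¹ * Xp * K)ᵀ * A * X = 0 := by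
      have : (A⁻¹)ᵀ = A⁻¹ := by rw [Matrix.transpose_nonsing_inv, hA]
      calc (A⁻¹ * Xp * K)ᵀ * A * X = Kᵀ * Xpᵀ * (A⁻¹ * A) * X := by
            simp [Matrix.transpose_mul, this, Matrix.mul_assoc]
        _ = 0 := by rw [hinvA, Matrix.mul_one, Matrix.mul_assoc, hXpX, Matrix.mul_zero]
    have h3 : Xᵀ * A * (X * W) = J * W := by
      rw [← Matrix.mul_assoc, hX]
    have h4 : Xᵀ * A * (A⁻¹ * Xp * K) = 0 := by
      calc Xᵀ * A * (A⁻¹ * Xp * K) = Xᵀ * (A * A⁻¹) * Xp * K := by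
            simp [Matrix.mul_assoc]
        _ = 0 := by rw [hAinvA, Matrix.mul_one, hperp, Matrix.zero_mul]
    calc (X * W + A⁻¹ * Xp * K)ᵀ * A * X + Xᵀ * A * (X * W + A⁻¹ * Xp * K)
        = ((X * W)ᵀ * A * X + (A⁻¹ * Xp * K)ᵀ * A * X)
          + (Xᵀ * A * (X * W) + Xᵀ * A * (A⁻¹ * Xp * K)) := by
          simp [Matrix.transpose_add, Matrix.add_mul, Matrix.mul_add]
      _ = Wᵀ * J + J * W := by rw [h1, h2, h3, h4]; simp
  rw [hLHS, hJW]
  constructor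
  · intro h; linear_combination (norm := abel) h
  · intro h; linear_combination (norm := abel) h
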